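/- arXiv:1904.11911 — 4 statements merged into one kernel-verified Lean document; each statement's English description precedes it below -/
import Mathlib

section
/- Let Φ > 0, b > 0 and H(y) = (y-b)² + (2/Φ) e^{-Φy}(y - b + 1/Φ). Then there exists C > 0 such that H(y) ≥ C·y for all y ≥ 0. -/
open Real

theorem H_linear_lower_bound
    (Φ b : ℝ) (hΦ : 0 < Φ) (hb : 0 < b)
    (H : ℝ → ℝ)
    (hH : ∀ y, H y = (y - b) ^ 2 + (2 / Φ) * Real.exp (-Φ * y) * (y - b + 1 / Φ)) :
    ∃ C > (0:ℝ), ∀ y ≥ (0:ℝ), C * y ≤ H y := by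
  set u := 1/Φ with hu_def
  have hu : 0 < u := by positivity
  have huΦ : Φ * u = 1 := mul_one_div_cancel hΦ.ne'
  set E := Real.exp (-(2*Φ*b)) with hE_def
  have hEpos : 0 < E := Real.exp_pos _
  have hEle1 : E ≤ 1 := Real.exp_le_one_iff.mpr (by nlinarith)
  set m := E * u^2 with hm
  have hmpos : 0 < m := by positivity
  refine ⟨min (b/2) (m/(2*b)), lt_min (by positivity) (by positivity), ?_⟩
  intro y hy
  have hexp : 0 < Real.exp (-Φ * y) := Real.exp_pos _
  rw [hH]
  have h2u : (2:ℝ)/Φ = 2*u := by rw [hu_def, mul_one_div]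
  rcases le_or_gt y (2*b) with h2 | h2
  · -- first get the uniform lower bound m
    have hHm : m ≤ (y - b) ^ 2 + (2 / Φ) * Real.exp (-Φ * y) * (y - b + 1 / Φ) := by
      rw [h2u, ← hu_def]
      rcases le_or_gt (y - b + u) 0 with hc | hc
      · have he1 : Real.exp (-Φ*y) ≤ 1 := Real.exp_le_one_iff.mpr (by nlinarith)
        have key : 2*u * (y - b + u) ≤ 2*u * Real.exp (-Φ * y) * (y - b + u) := by
          nlinarith [mul_nonneg hu.le (sub_nonneg.mpr he1)]
        nlinarith [sq_nonneg (y - b + u)]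
      · have he2 : E ≤ Real.exp (-Φ*y) := Real.exp_le_exp.mpr (by nlinarith)
        have key : 2*u * E * (y - b + u) ≤ 2*u * Real.exp (-Φ * y) * (y - b + u) := by
          nlinarith [mul_nonneg hu.le (sub_nonneg.mpr he2)]
        nlinarith [sq_nonneg (y - b + u*E), mul_nonneg (mul_nonneg (mul_nonneg hu.le hu.le) hEpos.le) (sub_nonneg.mpr hEle1)]
    have h1 : min (b/2) (m/(2*b)) * y ≤ (m/(2*b)) * y :=
      mul_le_mul_of_nonneg_right (min_le_right _ _) hy
    have h3 : (m/(2*b)) * y ≤ m := by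
      rw [div_mul_eq_mul_div, div_le_iff₀ (by positivity)]
      nlinarith
    linarith
  · have hfac : 0 ≤ (2 / Φ) * Real.exp (-Φ * y) * (y - b + 1 / Φ) := by
      have h5 : (0:ℝ) < 1/Φ := by positivity
      have : 0 < y - b + 1/Φ := by linarith
      positivity
    have h1 : min (b/2) (m/(2*b)) * y ≤ (b/2) * y :=
      mul_le_mul_of_nonneg_right (min_le_left _ _) hy
    have h4 : (b/2) * y ≤ (y - b)^2 := by
      nlinarith [sq_nonneg (y - 2*b), mul_nonneg (sub_nonneg.2 h2.le) hb.le]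
    linarith
end

section
/- For all Φ > 0 and all x < 0, one has x + x·e^{Φx} - (2/Φ)(e^{Φx} - 1) < 0. -/
open Real

lemma aux_f_neg (t : ℝ) (ht : t < 0) :
    t + t * Real.exp t - 2 * (Real.exp t - 1) < 0 := by
  set f : ℝ → ℝ := fun s => s + s * Real.exp s - 2 * (Real.exp s - 1) with hf
  have hmono : StrictMonoOn f (Set.Iic (0 : ℝ)) := by
    apply strictMonoOn_of_deriv_pos (convex_Iic 0)
    · fun_prop
    · intro s hs
      rw [interior_Iic] at hs
      have hderiv : deriv f s = 1 - Real.exp s + s * Real.exp s := by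
        rw [hf]
        rw [deriv_fun_sub (by fun_prop) (by fun_prop), deriv_fun_add (by fun_prop) (by fun_prop)]
        rw [deriv_fun_mul (by fun_prop) (by fun_prop)]
        rw [deriv_const_mul _ (by fun_prop)]
        simp [Real.deriv_exp]
        ring
      rw [hderiv]
      have h1 : Real.exp s - s * Real.exp s < 1 := by
        have h2 : -s + 1 < Real.exp (-s) := Real.add_one_lt_exp (show (-s : ℝ) ≠ 0 by by_contra h; simp at h; exact absurd h (ne_of_lt hs))
        have h3 : (1 - s) * Real.exp s < Real.exp (-s) * Real.exp s :=
          mul_lt_mul_of_pos_right (by linarith) (Real.exp_pos s)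
        rw [← Real.exp_add] at h3
        simp at h3
        nlinarith
      linarith
  have := hmono (Set.mem_Iic.2 ht.le) (Set.mem_Iic.2 le_rfl) ht
  simpa [hf] using this

theorem integrand_negative
    (Φ : ℝ) (hΦ : 0 < Φ) (x : ℝ) (hx : x < 0) :
    x + x * Real.exp (Φ * x) - (2 / Φ) * (Real.exp (Φ * x) - 1) < 0 := by
  have h := aux_f_neg (Φ * x) (by exact mul_neg_of_pos_of_neg hΦ hx)
  have key : x + x * Real.exp (Φ * x) - (2 / Φ) * (Real.exp (Φ * x) - 1)
      = (Φ * x + Φ * x * Real.exp (Φ * x) - 2 * (Real.exp (Φ * x) - 1)) / Φ := by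
    field_simp
  rw [key]
  exact div_neg_of_neg_of_pos h hΦ
end

section
/- Let Φ > 0, b > 0, c₀ ∈ ℝ, c₁ < 0, c₂ > 0 and let W : [0,∞) → ℝ be continuous, strictly increasing, with W > 0 on (0,∞) and satisfying W(a-x)/W(a) ≤ e^{-Φx} for all 0 ≤ x ≤ a. Define g(a) = 2c₁∫₀^a W(x)dx - 2c₂∫₀^a e^{-Φx}W(x)dx + W(a)(c₀ - 2a c₁ + 2b c₁ - (2c₂/Φ)e^{-Φa}). Then g(a)/W(a) → ∞ as a → ∞, and hence g(a) → ∞ as a → ∞. -/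
open Real Set Filter intervalIntegral

theorem g_tendsto_atTop
    (Φ b c₀ c₁ c₂ : ℝ) (hΦ : 0 < Φ) (hb : 0 < b) (hc₁ : c₁ < 0) (hc₂ : 0 < c₂)
    (W : ℝ → ℝ)
    (hWcont : ContinuousOn W (Ici 0))
    (hWmono : StrictMonoOn W (Ici 0))
    (hWpos : ∀ x > (0:ℝ), 0 < W x)
    (hWdom : ∀ a x : ℝ, 0 ≤ x → x ≤ a → W (a - x) ≤ Real.exp (-Φ * x) * W a)
    (g : ℝ → ℝ)
    (hg : ∀ a, g a =
      2 * c₁ * (∫ x in (0:ℝ)..a, W x) - 2 * c₂ * (∫ x in (0:ℝ)..a, Real.exp (-Φ * x) * W x)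
        + W a * (c₀ - 2 * a * c₁ + 2 * b * c₁ - (2 * c₂ / Φ) * Real.exp (-Φ * a))) :
    Tendsto (fun a => g a / W a) atTop atTop ∧ Tendsto g atTop atTop := by
  set K : ℝ := c₀ + 2 * b * c₁ + 2 * c₁ / Φ - 4 * c₂ / Φ with hK
  have key : ∀ a : ℝ, 1 ≤ a → K + (-2 * c₁) * a ≤ g a / W a := by
    intro a ha
    have ha0 : (0:ℝ) < a := lt_of_lt_of_le one_pos ha
    have hWa : 0 < W a := hWpos a ha0
    have hsub : uIcc (0:ℝ) a ⊆ Ici 0 := by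
      rw [uIcc_of_le ha0.le]
      exact fun x hx => hx.1
    -- pointwise bound for W
    have hptW : ∀ x ∈ Icc (0:ℝ) a, W x ≤ Real.exp (-Φ * (a - x)) * W a := by
      intro x hx
      have := hWdom a (a - x) (by linarith [hx.2]) (by linarith [hx.1])
      simpa using this
    -- integrability
    have hIW : IntervalIntegrable W MeasureTheory.volume 0 a :=
      (hWcont.mono hsub).intervalIntegrable
    have hIeW : IntervalIntegrable (fun x => Real.exp (-Φ * x) * W x)
        MeasureTheory.volume 0 a :=
      ((Real.continuous_exp.comp (continuous_const.mul continuous_id)).continuousOn.mul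
        (hWcont.mono hsub)).intervalIntegrable
    have hIe : IntervalIntegrable (fun x => Real.exp (-Φ * (a - x)) * W a)
        MeasureTheory.volume 0 a :=
      ((Real.continuous_exp.comp (by continuity)).mul continuous_const).intervalIntegrable _ _
    -- exact value of ∫ exp (-Φ*(a-x))
    have hexp_int : (∫ x in (0:ℝ)..a, Real.exp (-Φ * (a - x)) * W a)
        = Real.exp (-Φ * a) * ((Real.exp (Φ * a) - 1) / Φ) * W a := by
      have h1 : ∀ x : ℝ, Real.exp (-Φ * (a - x)) * W a
          = Real.exp (-Φ * a) * W a * Real.exp (Φ * x) := by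
        intro x
        rw [show -Φ * (a - x) = -Φ * a + Φ * x by ring, Real.exp_add]
        ring
      simp only [h1]
      rw [intervalIntegral.integral_const_mul]
      rw [intervalIntegral.integral_comp_mul_left (fun x => Real.exp x) hΦ.ne']
      simp [integral_exp, Real.exp_zero]
      ring
    -- bound 1
    have bound1 : (∫ x in (0:ℝ)..a, W x) ≤ W a / Φ := by
      have h := intervalIntegral.integral_mono_on ha0.le hIW hIe hptW
      rw [hexp_int] at h
      have h2 : Real.exp (-Φ * a) * ((Real.exp (Φ * a) - 1) / Φ) * W a ≤ W a / Φ := by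
        have he : Real.exp (-Φ * a) * (Real.exp (Φ * a) - 1) ≤ 1 := by
          have : Real.exp (-Φ * a) * Real.exp (Φ * a) = 1 := by
            rw [← Real.exp_add]; ring_nf; exact Real.exp_zero
          nlinarith [Real.exp_pos (-Φ * a)]
        calc Real.exp (-Φ * a) * ((Real.exp (Φ * a) - 1) / Φ) * W a
            = (Real.exp (-Φ * a) * (Real.exp (Φ * a) - 1)) * (W a / Φ) := by ring
          _ ≤ 1 * (W a / Φ) := by
              apply mul_le_mul_of_nonneg_right he (by positivity)
          _ = W a / Φ := one_mul _
      linarith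
    -- bound 2
    have bound2 : (∫ x in (0:ℝ)..a, Real.exp (-Φ * x) * W x) ≤ W a / Φ := by
      have hpt : ∀ x ∈ Icc (0:ℝ) a, Real.exp (-Φ * x) * W x ≤ Real.exp (-Φ * a) * W a := by
        intro x hx
        have h1 := hptW x hx
        have h2 : Real.exp (-Φ * x) * W x ≤ Real.exp (-Φ * x) * (Real.exp (-Φ * (a - x)) * W a) :=
          mul_le_mul_of_nonneg_left h1 (Real.exp_pos _).le
        calc Real.exp (-Φ * x) * W x
            ≤ Real.exp (-Φ * x) * (Real.exp (-Φ * (a - x)) * W a) := h2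
          _ = Real.exp (-Φ * a) * W a := by
              rw [← mul_assoc, ← Real.exp_add, show -Φ * x + -Φ * (a - x) = -Φ * a by ring]
      have h := intervalIntegral.integral_mono_on ha0.le hIeW
        (intervalIntegrable_const) hpt
      rw [intervalIntegral.integral_const] at h
      have hae : a * Real.exp (-Φ * a) ≤ 1 / Φ := by
        have h1 : Φ * a + 1 ≤ Real.exp (Φ * a) := Real.add_one_le_exp _
        have h2 : Real.exp (-Φ * a) * Real.exp (Φ * a) = 1 := by
          rw [← Real.exp_add]; ring_nf; exact Real.exp_zero
        rw [le_div_iff₀ hΦ]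
        nlinarith [Real.exp_pos (-Φ * a)]
      have : (a - 0) • (Real.exp (-Φ * a) * W a) ≤ W a / Φ := by
        simp only [sub_zero, smul_eq_mul]
        calc a * (Real.exp (-Φ * a) * W a) = (a * Real.exp (-Φ * a)) * W a := by ring
          _ ≤ (1 / Φ) * W a := mul_le_mul_of_nonneg_right hae hWa.le
          _ = W a / Φ := by ring
      linarith
    -- conclude
    rw [le_div_iff₀ hWa, hg a]
    have hexp1 : Real.exp (-Φ * a) ≤ 1 := by
      rw [Real.exp_le_one_iff]
      nlinarith
    have t1 : 2 * c₁ * (W a / Φ) ≤ 2 * c₁ * (∫ x in (0:ℝ)..a, W x) := by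
      apply mul_le_mul_of_nonpos_left bound1 (by linarith)
    have t2 : -(2 * c₂) * (W a / Φ) ≤ -(2 * c₂) * (∫ x in (0:ℝ)..a, Real.exp (-Φ * x) * W x) := by
      apply mul_le_mul_of_nonpos_left bound2 (by linarith)
    have t3 : W a * (-(2 * c₂ / Φ)) ≤ W a * (-(2 * c₂ / Φ) * Real.exp (-Φ * a)) := by
      have : -(2 * c₂ / Φ) * Real.exp (-Φ * a) ≥ -(2 * c₂ / Φ) := by
        nlinarith [Real.exp_pos (-Φ * a), div_pos (by linarith : (0:ℝ) < 2 * c₂) hΦ]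
      exact mul_le_mul_of_nonneg_left this hWa.le
    have expand : (K + -2 * c₁ * a) * W a
        = 2 * c₁ * (W a / Φ) + (-(2 * c₂) * (W a / Φ))
          + W a * (c₀ - 2 * a * c₁ + 2 * b * c₁) + W a * (-(2 * c₂ / Φ)) := by
      rw [hK]
      field_simp
      ring
    nlinarith [t1, t2, t3]
  have tlin : Tendsto (fun a : ℝ => K + (-2 * c₁) * a) atTop atTop := by
    apply tendsto_atTop_add_const_left
    exact Tendsto.const_mul_atTop (by linarith) tendsto_id
  have h1 : Tendsto (fun a => g a / W a) atTop atTop := by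
    apply tendsto_atTop_mono' atTop _ tlin
    filter_upwards [eventually_ge_atTop (1:ℝ)] with a ha using key a ha
  refine ⟨h1, ?_⟩
  have hW1 : 0 < W 1 := hWpos 1 one_pos
  have tlin2 : Tendsto (fun a => (g a / W a) * W 1) atTop atTop :=
    Tendsto.atTop_mul_const hW1 h1
  apply tendsto_atTop_mono' atTop _ tlin2
  filter_upwards [eventually_ge_atTop (1:ℝ), h1.eventually_ge_atTop 0] with a ha h0
  have hWa : 0 < W a := hWpos a (lt_of_lt_of_le one_pos ha)
  have hW1a : W 1 ≤ W a := by
    rcases eq_or_lt_of_le ha with h | h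
    · rw [h]
    · exact (hWmono (mem_Ici.2 one_pos.le) (mem_Ici.2 (by linarith)) h).le
  calc (g a / W a) * W 1 ≤ (g a / W a) * W a :=
        mul_le_mul_of_nonneg_left hW1a h0
    _ = g a := div_mul_cancel₀ _ hWa.ne'
end

section
/- Let Φ > 0, b > 0, c₀ ∈ ℝ, c₁ < 0, c₂ > 0 with c₀ + 2c₁b - (2/Φ)c₂ < 0 (the case b > (c₂/Φ - c₀/2)/c₁). Let W : [0,∞) → ℝ be continuously differentiable on (0,∞), strictly increasing, positive on (0,∞), with W(a-x) ≤ e^{-Φx}W(a) for 0 ≤ x ≤ a. Set g₁(a) = 2c₁∫₀^aW - 2c₂∫₀^a e^{-Φx}W(x)dx, g₂(a) = c₀ + 2c₁(b-a) - (2c₂/Φ)e^{-Φa}, and g = g₁ + W·g₂. Assume g is continuous on [0,∞), differentiable on (0,∞) with g' = W'·g₂, g(a) → ∞ as a → ∞, and either (i) W(0) = 0 (so g(0) = 0) with g₂(0) < 0, or (ii) W(0) > 0 with g(0) = W(0)g₂(0) < 0. Then g has a unique root a* in (0,∞), g < 0 on (0,a*), g > 0 on (a*,∞), and g'(a*) >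 0. -/
open Real Set Filter intervalIntegral

theorem g_unique_root
    (Φ b c₀ c₁ c₂ : ℝ) (hΦ : 0 < Φ) (hb : 0 < b) (hc₁ : c₁ < 0) (hc₂ : 0 < c₂)
    (hcase : c₀ + 2 * c₁ * b - (2 / Φ) * c₂ < 0)
    (W W' : ℝ → ℝ)
    (hWcont : ContinuousOn W (Ici 0))
    (hW' : ∀ x > (0:ℝ), HasDerivAt W (W' x) x)
    (hW'cont : ContinuousOn W' (Ioi 0))
    (hW'pos : ∀ x > (0:ℝ), 0 < W' x)
    (hWmono : StrictMonoOn W (Ici 0))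
    (hWpos : ∀ x > (0:ℝ), 0 < W x)
    (hWdom : ∀ a x : ℝ, 0 ≤ x → x ≤ a → W (a - x) ≤ Real.exp (-Φ * x) * W a)
    (g₁ g₂ g : ℝ → ℝ)
    (hg₁ : ∀ a, g₁ a =
      2 * c₁ * (∫ x in (0:ℝ)..a, W x) - 2 * c₂ * ∫ x in (0:ℝ)..a, Real.exp (-Φ * x) * W x)
    (hg₂ : ∀ a, g₂ a = c₀ + 2 * c₁ * (b - a) - (2 * c₂ / Φ) * Real.exp (-Φ * a))
    (hg : ∀ a, g a = g₁ a + W a * g₂ a)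
    (hgcont : ContinuousOn g (Ici 0))
    (hgderiv : ∀ a > (0:ℝ), HasDerivAt g (W' a * g₂ a) a)
    (hgtop : Tendsto g atTop atTop)
    (hcases : (W 0 = 0 ∧ g 0 = 0 ∧ g₂ 0 < 0) ∨ (0 < W 0 ∧ g 0 = W 0 * g₂ 0 ∧ g 0 < 0)) :
    ∃ astar > (0:ℝ), g astar = 0 ∧ (∀ a > (0:ℝ), g a = 0 → a = astar) ∧
      (∀ a ∈ Ioo 0 astar, g a < 0) ∧ (∀ a > astar, 0 < g a) ∧
      0 < W' astar * g₂ astar := by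
  -- g₂ is strictly increasing
  have hg₂mono : StrictMono g₂ := by
    intro x y hxy
    rw [hg₂ x, hg₂ y]
    have h1 : Real.exp (-Φ * y) < Real.exp (-Φ * x) := by
      apply Real.exp_lt_exp.mpr; nlinarith
    have h2 : 0 < 2 * c₂ / Φ := by positivity
    nlinarith
  -- g₂ 0 < 0
  have hg₂0 : g₂ 0 < 0 := by
    rw [hg₂ 0]
    simp only [mul_zero, neg_zero, Real.exp_zero, sub_zero, mul_one]
    have : (2 / Φ) * c₂ = 2 * c₂ / Φ := by ring
    linarith [hcase, this ▸ hcase]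
  -- g 0 ≤ 0
  have hg0 : g 0 ≤ 0 := by
    rcases hcases with ⟨_, h, _⟩ | ⟨_, _, h⟩
    · exact le_of_eq h
    · exact le_of_lt h
  -- g₂ is continuous
  have hg₂cont : Continuous g₂ := by
    have : g₂ = fun a => c₀ + 2 * c₁ * (b - a) - (2 * c₂ / Φ) * Real.exp (-Φ * a) :=
      funext hg₂
    rw [this]; fun_prop
  -- there is T > 0 with g₂ T > 0
  obtain ⟨T, hTpos, hg₂T⟩ : ∃ T > (0:ℝ), 0 < g₂ T := by
    have hd : (0:ℝ) < -(2 * c₁) := by linarith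
    have hn : (0:ℝ) < 1 - g₂ 0 := by linarith
    refine ⟨(1 - g₂ 0) / (-(2 * c₁)), div_pos hn hd, ?_⟩
    set T := (1 - g₂ 0) / (-(2 * c₁)) with hTdef
    have hT0 : 0 < T := div_pos hn hd
    have hTe : -(2 * c₁) * T = 1 - g₂ 0 := by
      rw [hTdef, mul_div_cancel₀ _ (ne_of_gt hd)]
    have hexp : Real.exp (-Φ * T) ≤ 1 := by
      apply Real.exp_le_one_iff.mpr; nlinarith
    have h2 : 0 ≤ 2 * c₂ / Φ := by positivity
    have := hg₂ T
    have := hg₂ 0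
    simp only [mul_zero, neg_zero, Real.exp_zero, sub_zero, mul_one] at this
    nlinarith [mul_le_mul_of_nonneg_left hexp h2]
  -- root t₀ of g₂ by IVT
  obtain ⟨t₀, ht₀mem, ht₀⟩ : ∃ t₀ ∈ Icc (0:ℝ) T, g₂ t₀ = 0 := by
    have h := intermediate_value_Icc (le_of_lt hTpos) hg₂cont.continuousOn
    have : (0:ℝ) ∈ Icc (g₂ 0) (g₂ T) := ⟨le_of_lt hg₂0, le_of_lt hg₂T⟩
    obtain ⟨t₀, ht₀mem, ht₀⟩ := h this
    exact ⟨t₀, ht₀mem, ht₀⟩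
  have ht₀pos : 0 < t₀ := by
    by_contra h
    push_neg at h
    have := ht₀mem.1
    have : t₀ = 0 := le_antisymm h this
    rw [this] at ht₀; linarith
  -- sign of g₂
  have hg₂neg : ∀ x, x < t₀ → g₂ x < 0 := fun x hx => by
    have := hg₂mono hx; linarith [ht₀ ▸ this]
  have hg₂pos : ∀ x, t₀ < x → 0 < g₂ x := fun x hx => by
    have := hg₂mono hx; linarith [ht₀ ▸ this]
  -- deriv of g
  have hderiv : ∀ x > (0:ℝ), deriv g x = W' x * g₂ x := fun x hx => (hgderiv x hx).deriv
  -- g strictly decreasing on [0, t₀]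
  have hanti : StrictAntiOn g (Icc 0 t₀) := by
    apply strictAntiOn_of_deriv_neg (convex_Icc 0 t₀)
      (hgcont.mono (Icc_subset_Ici_self))
    intro x hx
    rw [interior_Icc] at hx
    rw [hderiv x hx.1]
    exact mul_neg_of_pos_of_neg (hW'pos x hx.1) (hg₂neg x hx.2)
  -- g strictly increasing on [t₀, ∞)
  have hmono : StrictMonoOn g (Ici t₀) := by
    apply strictMonoOn_of_deriv_pos (convex_Ici t₀)
      (hgcont.mono (Ici_subset_Ici.mpr (le_of_lt ht₀pos)))
    intro x hx
    rw [interior_Ici] at hx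
    rw [hderiv x (lt_trans ht₀pos hx)]
    exact mul_pos (hW'pos x (lt_trans ht₀pos hx)) (hg₂pos x hx)
  -- g t₀ < 0
  have hgt₀ : g t₀ < 0 :=
    lt_of_lt_of_le (hanti (left_mem_Icc.mpr (le_of_lt ht₀pos))
      (right_mem_Icc.mpr (le_of_lt ht₀pos)) ht₀pos) hg0
  -- find R > t₀ with g R > 0
  obtain ⟨R, hgR, hRt₀⟩ : ∃ R, 0 < g R ∧ t₀ < R :=
    ((hgtop.eventually_gt_atTop 0).and (eventually_gt_atTop t₀)).exists
  -- root of g by IVT on [t₀, R]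
  obtain ⟨astar, hamem, ha⟩ : ∃ a ∈ Icc t₀ R, g a = 0 := by
    have h := intermediate_value_Icc (le_of_lt hRt₀)
      (hgcont.mono (fun x hx => le_trans (le_of_lt ht₀pos) hx.1))
    have : (0:ℝ) ∈ Icc (g t₀) (g R) := ⟨le_of_lt hgt₀, le_of_lt hgR⟩
    obtain ⟨a, hmem, heq⟩ := h this
    exact ⟨a, hmem, heq⟩
  have hastar : t₀ < astar := by
    rcases lt_or_eq_of_le hamem.1 with h | h
    · exact h
    · exfalso; rw [← h] at ha; linarith
  have hapos : 0 < astar := lt_trans ht₀pos hastar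
  -- g < 0 on (0, astar)
  have hneg : ∀ a ∈ Ioo 0 astar, g a < 0 := by
    intro a ⟨ha0, haa⟩
    rcases le_or_gt a t₀ with h | h
    · rcases lt_or_eq_of_le h with h' | h'
      · exact lt_of_lt_of_le
          (hanti (left_mem_Icc.mpr (le_of_lt ht₀pos)) ⟨le_of_lt ha0, h⟩ ha0) hg0
      · rw [h']; exact hgt₀
    · have := hmono (le_of_lt h) (le_trans (le_of_lt h) (le_of_lt haa)) haa
      rw [ha] at this; exact this
  -- g > 0 on (astar, ∞)
  have hpos : ∀ a > astar, 0 < g a := by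
    intro a haa
    have := hmono (le_of_lt hastar) (le_trans (le_of_lt hastar) (le_of_lt haa)) haa
    rw [ha] at this; exact this
  refine ⟨astar, hapos, ha, ?_, hneg, hpos,
    mul_pos (hW'pos astar hapos) (hg₂pos astar hastar)⟩
  intro a ha0 hga
  rcases lt_trichotomy a astar with h | h | h
  · exact absurd hga (ne_of_lt (hneg a ⟨ha0, h⟩))
  · exact h
  · exact absurd hga (ne_of_gt (hpos a h))
end
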